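/- Let p be a prime, s ≥ 1, and let n, m be nonnegative integers with n ≥ m, and r an integer with 1 ≤ r ≤ p^s − 1 and p ∤ r. Then p^s divides C(n·p^s, m·p^s + r). -/

import Mathlib

theorem stmt15 (p s n m r : ℕ) (hp : p.Prime) (hs : 1 ≤ s) (hmn : m ≤ n)
    (hr1 : 1 ≤ r) (hr2 : r ≤ p ^ s - 1) (hpr : ¬ p ∣ r) :
    p ^ s ∣ (n * p ^ s).choose (m * p ^ s + r) := by
  have hp1 : 1 < p := hp.one_lt
  have hps : 1 < p ^ s := Nat.one_lt_pow (by omega) hp1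
  set N := n * p ^ s with hNdef
  set k := m * p ^ s + r with hkdef
  by_cases hkn : k ≤ N
  · have hmn' : m < n := by
      rcases Nat.lt_or_ge m n with h | h
      · exact h
      · exfalso
        have : m = n := le_antisymm hmn h
        subst this
        omega
    have hn1 : 1 ≤ n := by omega
    have hchoose : N.choose k ≠ 0 := (Nat.choose_pos hkn).ne'
    haveI : Fact p.Prime := ⟨hp⟩
    rw [hp.pow_dvd_iff_le_factorization hchoose, Nat.factorization_def _ hp,
      padicValNat_choose hkn (Nat.lt_succ_self _)]
    have hlog : s ≤ Nat.log p N := by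
      apply Nat.le_log_of_pow_le hp1
      calc p ^ s = 1 * p ^ s := (one_mul _).symm
        _ ≤ n * p ^ s := Nat.mul_le_mul_right _ hn1
    have hsub : Finset.Ico 1 (s + 1) ⊆ (Finset.Ico 1 (Nat.log p N + 1)).filter
        fun i => p ^ i ≤ k % p ^ i + (N - k) % p ^ i := by
      intro i hi
      simp only [Finset.mem_Ico, Finset.mem_filter] at hi ⊢
      obtain ⟨hi1, hi2⟩ := hi
      have his : i ≤ s := by omega
      refine ⟨⟨hi1, by omega⟩, ?_⟩
      have hpi : 0 < p ^ i := Nat.pow_pos (by omega)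
      have hdvd : p ^ i ∣ p ^ s := pow_dvd_pow p his
      obtain ⟨c, hc⟩ := hdvd
      have hNmod : N % p ^ i = 0 := by
        rw [hNdef, hc, show n * (p ^ i * c) = p ^ i * (n * c) by ring, Nat.mul_mod_right]
      have hsum : (k % p ^ i + (N - k) % p ^ i) % p ^ i = 0 := by
        rw [← Nat.add_mod, Nat.add_sub_cancel' hkn, hNmod]
      have ha : k % p ^ i < p ^ i := Nat.mod_lt _ hpi
      have hb : (N - k) % p ^ i < p ^ i := Nat.mod_lt _ hpi
      by_contra hlt
      push_neg at hlt
      have hz : k % p ^ i + (N - k) % p ^ i = 0 := by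
        rwa [Nat.mod_eq_of_lt hlt] at hsum
      have hk0 : k % p ^ i = 0 := Nat.eq_zero_of_add_eq_zero_right hz
      apply hpr
      have h1 : p ^ i ∣ k := Nat.dvd_of_mod_eq_zero hk0
      have h2 : p ^ i ∣ m * p ^ s := Dvd.intro_left (m * c) (by rw [hc]; ring)
      have h3 : p ^ i ∣ r := by
        have := Nat.dvd_sub h1 h2
        rwa [hkdef, Nat.add_sub_cancel_left] at this
      exact dvd_trans (dvd_pow_self p (by omega : i ≠ 0)) h3
    calc s = (Finset.Ico 1 (s + 1)).card := by simp
      _ ≤ _ := Finset.card_le_card hsub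
  · rw [Nat.choose_eq_zero_of_lt (by omega)]
    exact dvd_zero _
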